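/- arXiv:2102.00261 — 2 statements merged into one kernel-verified Lean document; each statement's English description precedes it below -/
import Mathlib

section
/- Let n ≥ 1, T > 0, let A : [0,T] → ℝ^{n×n} be continuous, and let F : [0,T] → ℝ^{n×n} be differentiable with F'(t) = A(t) · F(t) for all t ∈ [0,T]. Then det(F(t)) = det(F(0)) · exp(∫₀ᵗ trace(A(s)) ds) for every t ∈ [0,T]. -/
open Matrix

attribute [local instance] Matrix.frobeniusNormedAddCommGroup Matrix.frobeniusNormedSpace

noncomputable def entryCLM (n : ℕ) (i j : Fin n) : Matrix (Fin n) (Fin n) ℝ →L[ℝ] ℝ :=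
  LinearMap.toContinuousLinearMap ((LinearMap.proj j).comp (LinearMap.proj (R := ℝ) (φ := fun _ : Fin n => Fin n → ℝ) i))

theorem det_row_formula (n : ℕ) (N : Matrix (Fin n) (Fin n) ℝ) :
    N.det = ∑ σ : Equiv.Perm (Fin n), ((Equiv.Perm.sign σ : ℤ) : ℝ) * ∏ i, N i (σ i) := by
  rw [← Matrix.det_transpose, Matrix.det_apply']
  simp [Matrix.transpose_apply]

theorem hasDerivAt_det (n : ℕ) (M : ℝ → Matrix (Fin n) (Fin n) ℝ)
    (M' : Matrix (Fin n) (Fin n) ℝ) (x : ℝ) (hM : HasDerivAt M M' x) :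
    HasDerivAt (fun t => (M t).det) (∑ i, ((M x).updateRow i (M' i)).det) x := by
  have hentry : ∀ i j : Fin n, HasDerivAt (fun t => M t i j) (M' i j) x :=
    fun i j => (entryCLM n i j).hasFDerivAt.comp_hasDerivAt x hM
  have h1 : HasDerivAt (fun t => ∑ σ : Equiv.Perm (Fin n),
        ((Equiv.Perm.sign σ : ℤ) : ℝ) * ∏ i, M t i (σ i))
      (∑ σ : Equiv.Perm (Fin n), ((Equiv.Perm.sign σ : ℤ) : ℝ) *
        ∑ i, (∏ j ∈ Finset.univ.erase i, M x j (σ j)) • M' i (σ i)) x := by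
    exact HasDerivAt.fun_sum fun σ _ =>
      (HasDerivAt.fun_finsetProd fun i _ => hentry i (σ i)).const_mul _
  have hfun : (fun t => (M t).det) = (fun t => ∑ σ : Equiv.Perm (Fin n),
      ((Equiv.Perm.sign σ : ℤ) : ℝ) * ∏ i, M t i (σ i)) :=
    funext fun t => det_row_formula n (M t)
  rw [hfun]
  convert h1 using 1
  simp_rw [Finset.mul_sum]
  rw [Finset.sum_comm]
  refine Finset.sum_congr rfl fun i _ => ?_
  rw [det_row_formula]
  refine Finset.sum_congr rfl fun σ _ => ?_
  have hprod : ∏ j, ((M x).updateRow i (M' i)) j (σ j)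
      = M' i (σ i) * ∏ j ∈ Finset.univ.erase i, M x j (σ j) := by
    rw [← Finset.mul_prod_erase Finset.univ _ (Finset.mem_univ i)]
    congr 1
    · simp [Matrix.updateRow_self]
    · exact Finset.prod_congr rfl fun j hj =>
        by rw [Matrix.updateRow_ne (Finset.ne_of_mem_erase hj)]
  rw [hprod]
  simp [smul_eq_mul]
  ring

/-- Liouville's formula: if `F' = A F` on `[0,T]` with `A` continuous, then
`det F(t) = det F(0) · exp(∫₀ᵗ trace A(s) ds)` for every `t ∈ [0,T]`. -/
theorem stmt5 (n : ℕ) (hn : 1 ≤ n) (T : ℝ) (hT : 0 < T)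
    (A F : ℝ → Matrix (Fin n) (Fin n) ℝ)
    (hA : ContinuousOn A (Set.Icc 0 T))
    (hF : ∀ t ∈ Set.Icc (0 : ℝ) T, HasDerivAt F (A t * F t) t) :
    ∀ t ∈ Set.Icc (0 : ℝ) T,
      (F t).det = (F 0).det * Real.exp (∫ s in (0 : ℝ)..t, (A s).trace) := by
  -- derivative of det F
  have hstep : ∀ x ∈ Set.Icc (0:ℝ) T,
      HasDerivAt (fun t => (F t).det) ((A x).trace * (F x).det) x := by
    intro x hx
    have h := hasDerivAt_det n F (A x * F x) x (hF x hx)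
    convert h using 1
    have hrow : ∀ i : Fin n, ((F x).updateRow i ((A x * F x) i)).det
        = A x i i * (F x).det := by
      intro i
      have hcomb : (A x * F x) i = ∑ l, A x i l • F x l := by
        funext j
        simp [Matrix.mul_apply, Finset.sum_apply]
      rw [hcomb, Matrix.det_updateRow_sum, smul_eq_mul]
    simp only [hrow]
    rw [Matrix.trace, Finset.sum_mul]
    simp [Matrix.diag]
  -- continuous extension of trace ∘ A
  set Ac : ℝ → ℝ := fun s => (A ((Set.projIcc 0 T hT.le s : Set.Icc (0:ℝ) T) : ℝ)).trace
    with hAc_def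
  have htraceCont : Continuous fun N : Matrix (Fin n) (Fin n) ℝ => N.trace := by
    have : (fun N : Matrix (Fin n) (Fin n) ℝ => N.trace)
        = fun N => ∑ i, entryCLM n i i N := by
      funext N; rfl
    rw [this]
    exact continuous_finset_sum _ fun i _ => (entryCLM n i i).continuous
  have hproj : Continuous fun s : ℝ => ((Set.projIcc 0 T hT.le s : Set.Icc (0:ℝ) T) : ℝ) :=
    continuous_subtype_val.comp (continuous_projIcc)
  have hAcCont : Continuous Ac := by
    apply htraceCont.comp
    exact hA.comp_continuous hproj fun s => (Set.projIcc 0 T hT.le s).2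
  have hAcEq : ∀ x ∈ Set.Icc (0:ℝ) T, Ac x = (A x).trace := by
    intro x hx
    simp [hAc_def, Set.projIcc_of_mem hT.le hx]
  set G : ℝ → ℝ := fun t => ∫ s in (0:ℝ)..t, Ac s with hG_def
  have hG : ∀ x : ℝ, HasDerivAt G (Ac x) x := fun x =>
    (hAcCont.integral_hasStrictDerivAt 0 x).hasDerivAt
  have hGeq : ∀ t ∈ Set.Icc (0:ℝ) T, G t = ∫ s in (0:ℝ)..t, (A s).trace := by
    intro t ht
    apply intervalIntegral.integral_congr
    intro s hs
    rw [Set.uIcc_of_le ht.1] at hs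
    exact hAcEq s ⟨hs.1, hs.2.trans ht.2⟩
  set h : ℝ → ℝ := fun t => (F t).det * Real.exp (-G t) with hh_def
  have hderiv : ∀ x ∈ Set.Icc (0:ℝ) T, HasDerivAt h 0 x := by
    intro x hx
    have hd := (hstep x hx).fun_mul ((hG x).fun_neg.exp)
    refine hd.congr_deriv ?_
    rw [hAcEq x hx]
    ring
  have hcont : ContinuousOn h (Set.Icc 0 T) := fun x hx =>
    ((hderiv x hx).continuousAt).continuousWithinAt
  have hconst : ∀ t ∈ Set.Icc (0:ℝ) T, h t = h 0 :=
    constant_of_has_deriv_right_zero hcont fun x hx =>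
      ((hderiv x (Set.mem_Icc_of_Ico hx)).hasDerivWithinAt)
  intro t ht
  have key := hconst t ht
  have hG0 : G 0 = 0 := by simp [hG_def]
  rw [hh_def] at key
  simp only [hG0, neg_zero, Real.exp_zero, mul_one] at key
  have := congrArg (fun y => y * Real.exp (G t)) key
  simp only [mul_assoc, ← Real.exp_add, neg_add_cancel, Real.exp_zero, mul_one] at this
  rw [this, hGeq t ht]
end

section
/- Let d ≥ 1, K ≥ 0, G ≥ 0, η > 0 and let φ : ℝ^{d×d} → ℝ be defined by φ(F) = d·K·‖sph E(F)‖² / (2 + η‖E(F)‖^{3/2}) + G·‖dev E(F)‖² / (1 + η‖E(F)‖^{3/2}) with E(F) = ½(FᵀF − I). Then φ is Fréchet differentiable on all of ℝ^{d×d} and its derivative is globally bounded: there exists ℓ ∈ ℝ such that ‖Dφ(F)‖ ≤ ℓ for all F ∈ ℝ^{d×d}, where ‖Dφ(F)‖ is the operator norm of the Fréchet derivative with respect to the Frobenius norm on ℝ^{d×d}. -/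
set_option maxHeartbeats 4000000

open Matrix

attribute [local instance] Matrix.frobeniusNormedAddCommGroup Matrix.frobeniusNormedSpace

namespace Stmt16Aux

variable {d : ℕ}

abbrev Mat (d : ℕ) := Matrix (Fin d) (Fin d) ℝ

/-- entrywise inner product -/
noncomputable def ip (A B : Mat d) : ℝ := ∑ i, ∑ j, A i j * B i j

lemma ip_comm (A B : Mat d) : ip A B = ip B A := by
  simp [ip, mul_comm]

lemma ip_add_right (A B C : Mat d) : ip A (B + C) = ip A B + ip A C := by
  simp [ip, mul_add, Finset.sum_add_distrib]

lemma ip_smul_right (A B : Mat d) (c : ℝ) : ip A (c • B) = c * ip A B := by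
  simp [ip, Finset.mul_sum, Matrix.smul_apply]; ring_nf
  exact Finset.sum_congr rfl fun i _ => Finset.sum_congr rfl fun j _ => by ring

lemma ip_sub_right (A B C : Mat d) : ip A (B - C) = ip A B - ip A C := by
  simp [ip, mul_sub, Finset.sum_sub_distrib]

lemma ip_sub_left (A B C : Mat d) : ip (A - B) C = ip A C - ip B C := by
  rw [ip_comm, ip_sub_right, ip_comm A C, ip_comm B C]

lemma ip_smul_left (A B : Mat d) (c : ℝ) : ip (c • A) B = c * ip A B := by
  rw [ip_comm, ip_smul_right, ip_comm]

lemma ip_self_nonneg (A : Mat d) : 0 ≤ ip A A :=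
  Finset.sum_nonneg fun i _ => Finset.sum_nonneg fun j _ => mul_self_nonneg _

lemma norm_eq_sqrt_ip (A : Mat d) : ‖A‖ = Real.sqrt (ip A A) := by
  rw [Matrix.frobenius_norm_def, Real.sqrt_eq_rpow]
  congr 1
  refine Finset.sum_congr rfl fun i _ => Finset.sum_congr rfl fun j _ => ?_
  rw [Real.rpow_two, Real.norm_eq_abs, sq_abs, sq]

lemma ip_self_eq (A : Mat d) : ip A A = ‖A‖ ^ 2 := by
  rw [norm_eq_sqrt_ip, Real.sq_sqrt (ip_self_nonneg A)]

lemma abs_ip_le (A B : Mat d) : |ip A B| ≤ ‖A‖ * ‖B‖ := by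
  rw [norm_eq_sqrt_ip, norm_eq_sqrt_ip]
  have key : (ip A B) ^ 2 ≤ ip A A * ip B B := by
    have h := Finset.sum_mul_sq_le_sq_mul_sq Finset.univ
        (fun p : Fin d × Fin d => A p.1 p.2) (fun p => B p.1 p.2)
    simpa [ip, sq, ← Finset.sum_product', Finset.univ_product_univ] using h
  have h1 : |ip A B| = Real.sqrt ((ip A B) ^ 2) := (Real.sqrt_sq_eq_abs _).symm
  rw [h1, ← Real.sqrt_mul (ip_self_nonneg A)]
  exact Real.sqrt_le_sqrt key

lemma ip_one_right (A : Mat d) : ip A 1 = Matrix.trace A := by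
  simp only [ip, Matrix.one_apply, mul_ite, mul_one, mul_zero, Matrix.trace, Matrix.diag]
  refine Finset.sum_congr rfl fun i _ => ?_
  rw [Finset.sum_ite_eq Finset.univ i (fun j => A i j)]
  simp

lemma ip_one_left (A : Mat d) : ip 1 A = Matrix.trace A := by
  rw [ip_comm, ip_one_right]

lemma ip_one_one : ip (1 : Mat d) 1 = d := by
  rw [ip_one_right, Matrix.trace_one]; simp

lemma norm_one_sq : ‖(1 : Mat d)‖ ^ 2 = d := by
  rw [← ip_self_eq, ip_one_one]

lemma trace_le (A : Mat d) : |Matrix.trace A| ≤ ‖A‖ * ‖(1 : Mat d)‖ := by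
  rw [← ip_one_right]; exact abs_ip_le A 1

lemma trace_transpose_mul (F : Mat d) : Matrix.trace (Fᵀ * F) = ip F F := by
  simp only [Matrix.trace, Matrix.diag, Matrix.mul_apply, Matrix.transpose_apply, ip]
  rw [Finset.sum_comm]

/-- `ip A ·` as a continuous linear map. -/
noncomputable def ipCLM (A : Mat d) : Mat d →L[ℝ] ℝ :=
  LinearMap.mkContinuous
    { toFun := fun B => ip A B
      map_add' := fun B C => ip_add_right A B C
      map_smul' := fun c B => by simpa using ip_smul_right A B c } ‖A‖
    (fun B => by simpa [Real.norm_eq_abs] using abs_ip_le A B)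

@[simp] lemma ipCLM_apply (A B : Mat d) : ipCLM A B = ip A B := rfl

lemma ipBBM : IsBoundedBilinearMap ℝ (fun p : Mat d × Mat d => ip p.1 p.2) where
  add_left := fun A B C => by rw [ip_comm, ip_add_right, ip_comm C A, ip_comm C B]
  smul_left := fun c A B => by simpa using ip_smul_left A B c
  add_right := fun A B C => ip_add_right A B C
  smul_right := fun c A B => by simpa using ip_smul_right A B c
  bound := ⟨1, one_pos, fun A B => by
    simpa [Real.norm_eq_abs] using abs_ip_le A B⟩

lemma mulBBM : IsBoundedBilinearMap ℝ (fun p : Mat d × Mat d => p.1 * p.2) where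
  add_left := fun A B C => add_mul A B C
  smul_left := fun c A B => smul_mul_assoc c A B
  add_right := fun A B C => mul_add A B C
  smul_right := fun c A B => mul_smul_comm c A B
  bound := ⟨1, one_pos, fun A B => by
    simpa using Matrix.frobenius_norm_mul A B⟩

/-- transpose as a continuous linear map -/
noncomputable def TC : Mat d →L[ℝ] Mat d :=
  LinearMap.mkContinuous
    { toFun := fun A => Aᵀ
      map_add' := fun A B => Matrix.transpose_add A B
      map_smul' := fun c A => Matrix.transpose_smul c A } 1
    (fun A => by simp [Matrix.frobenius_norm_transpose A])

@[simp] lemma TC_apply (A : Mat d) : TC A = Aᵀ := rfl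

lemma hasFDerivAt_N2 (A : Mat d) :
    HasFDerivAt (fun M : Mat d => ip M M) ((2 : ℝ) • ipCLM A) A := by
  have h := (ipBBM (d := d)).hasFDerivAt (A, A)
  have h2 : HasFDerivAt (fun M : Mat d => (M, M))
      ((ContinuousLinearMap.id ℝ (Mat d)).prod (ContinuousLinearMap.id ℝ (Mat d))) A :=
    ((ContinuousLinearMap.id ℝ (Mat d)).prod (ContinuousLinearMap.id ℝ (Mat d))).hasFDerivAt
  have h3 : HasFDerivAt ((fun p : Mat d × Mat d => ip p.1 p.2) ∘ (fun M : Mat d => (M, M)))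
      (((ipBBM (d := d)).deriv (A, A)).comp
        ((ContinuousLinearMap.id ℝ (Mat d)).prod (ContinuousLinearMap.id ℝ (Mat d)))) A :=
    HasFDerivAt.comp A h h2
  have heq : ((ipBBM (d := d)).deriv (A, A)).comp
      ((ContinuousLinearMap.id ℝ (Mat d)).prod (ContinuousLinearMap.id ℝ (Mat d)))
      = (2 : ℝ) • ipCLM A := by
    ext H
    change (ipBBM (d := d)).deriv (A, A) (H, H) = ((2 : ℝ) • ipCLM A) H
    simp [IsBoundedBilinearMap.deriv_apply, ip_comm H A, two_mul]
  rw [heq] at h3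
  exact h3.congr_fderiv rfl

lemma hasFDerivAt_E (E : Mat d → Mat d) (hE : ∀ F, E F = (1 / 2 : ℝ) • (Fᵀ * F - 1)) (F : Mat d) :
    ∃ cE : Mat d →L[ℝ] Mat d, HasFDerivAt E cE F ∧
      (∀ H, cE H = (1 / 2 : ℝ) • (Fᵀ * H + Hᵀ * F)) ∧ (∀ H, ‖cE H‖ ≤ ‖F‖ * ‖H‖) := by
  have hmul := (mulBBM (d := d)).hasFDerivAt (Fᵀ, F)
  have hpair : HasFDerivAt (fun G : Mat d => (Gᵀ, G))
      (TC.prod (ContinuousLinearMap.id ℝ (Mat d))) F :=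
    (TC.prod (ContinuousLinearMap.id ℝ (Mat d))).hasFDerivAt
  have hcomp : HasFDerivAt (fun G : Mat d => Gᵀ * G)
      (((mulBBM (d := d)).deriv (Fᵀ, F)).comp (TC.prod (ContinuousLinearMap.id ℝ (Mat d)))) F := by
    have := HasFDerivAt.comp (f := fun G : Mat d => (Gᵀ, G))
      (g := fun p : Mat d × Mat d => p.1 * p.2) F hmul hpair
    exact this
  have hsm := (hcomp.sub_const 1).const_smul (1 / 2 : ℝ)
  have hfn : E = fun G : Mat d => (1 / 2 : ℝ) • (Gᵀ * G - 1) := funext hE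
  refine ⟨_, by rw [hfn]; exact hsm, fun H => ?_, fun H => ?_⟩
  · change (1 / 2 : ℝ) • ((mulBBM (d := d)).deriv (Fᵀ, F) (TC H, H)) = _
    simp [IsBoundedBilinearMap.deriv_apply, smul_add]
  · have h1 : ((1 / 2 : ℝ) • (((mulBBM (d := d)).deriv (Fᵀ, F)).comp
        (TC.prod (ContinuousLinearMap.id ℝ (Mat d))))) H
        = (1 / 2 : ℝ) • (Fᵀ * H + Hᵀ * F) := by
      change (1 / 2 : ℝ) • ((mulBBM (d := d)).deriv (Fᵀ, F) (TC H, H)) = _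
      simp [IsBoundedBilinearMap.deriv_apply]
    refine (le_of_eq (congrArg norm h1)).trans ?_; rw [norm_smul]
    have h2 : ‖Fᵀ * H + Hᵀ * F‖ ≤ ‖F‖ * ‖H‖ + ‖F‖ * ‖H‖ := by
      refine (norm_add_le _ _).trans (add_le_add ?_ ?_)
      · simpa [Matrix.frobenius_norm_transpose] using Matrix.frobenius_norm_mul Fᵀ H
      · simpa [Matrix.frobenius_norm_transpose, mul_comm] using Matrix.frobenius_norm_mul Hᵀ F
    rw [Real.norm_eq_abs]
    calc |(1/2 : ℝ)| * ‖Fᵀ * H + Hᵀ * F‖ ≤ (1/2) * (‖F‖ * ‖H‖ + ‖F‖ * ‖H‖) := by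
          rw [abs_of_nonneg (by norm_num)]
          exact mul_le_mul_of_nonneg_left h2 (by norm_num)
      _ = ‖F‖ * ‖H‖ := by ring

lemma ip_expand (A : Mat d) (c : ℝ) :
    ip (A - c • 1) (A - c • 1) = ip A A - 2 * c * Matrix.trace A + c * c * d := by
  rw [ip_sub_right, ip_sub_left, ip_sub_left, ip_smul_left, ip_smul_right, ip_smul_left,
    ip_smul_right, ip_one_left, ip_one_right, ip_one_one]
  ring

lemma mul3_le {a b c a' b' c' : ℝ} (ha : 0 ≤ a) (hb : 0 ≤ b) (hc : 0 ≤ c)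
    (h1 : a ≤ a') (h2 : b ≤ b') (h3 : c ≤ c') : a * (b * c) ≤ a' * (b' * c') :=
  mul_le_mul h1 (mul_le_mul h2 h3 hc (hb.trans h2)) (mul_nonneg hb hc) (ha.trans h1)

lemma mul2_le {a b a' b' : ℝ} (ha : 0 ≤ a) (hb : 0 ≤ b)
    (h1 : a ≤ a') (h2 : b ≤ b') : a * b ≤ a' * b' :=
  mul_le_mul h1 h2 hb (ha.trans h1)

lemma rpow_32 (x : ℝ) (hx : 0 ≤ x) : x ^ (3/2 : ℝ) = Real.sqrt x * x := by
  rcases eq_or_lt_of_le hx with h | h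
  · rw [← h]; simp [Real.zero_rpow (by norm_num : (3/2 : ℝ) ≠ 0)]
  · have h12 : x ^ (1/2 : ℝ) = Real.sqrt x := (Real.sqrt_eq_rpow x).symm
    rw [show (3/2 : ℝ) = 1/2 + 1 by norm_num, Real.rpow_add h, Real.rpow_one, h12]

lemma sq_rpow_34 (x : ℝ) (hx : 0 ≤ x) : (x ^ 2 : ℝ) ^ (3/4 : ℝ) = Real.sqrt x * x := by
  rw [← Real.rpow_natCast x 2, ← Real.rpow_mul hx]
  norm_num
  exact rpow_32 x hx

lemma sq_rpow_m14 (x : ℝ) (hx : 0 < x) : (x ^ 2 : ℝ) ^ ((3/4 : ℝ) - 1) = (Real.sqrt x)⁻¹ := by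
  rw [← Real.rpow_natCast x 2, ← Real.rpow_mul hx.le]
  have h12 : x ^ (-(1/2) : ℝ) = (Real.sqrt x)⁻¹ := by
    rw [Real.rpow_neg hx.le]
    congr 1
    exact (Real.sqrt_eq_rpow x).symm
  rw [show ((2 : ℕ) : ℝ) * ((3/4 : ℝ) - 1) = -(1/2 : ℝ) by norm_num, h12]

lemma p2_le (p : ℝ) (hp : 0 ≤ p) : p ^ 2 * (1 + p) ≤ 1 + 2 * p ^ 3 := by
  nlinarith [mul_nonneg hp (sq_nonneg (p - 1)), sq_nonneg (p - 1)]

lemma p5_le (p : ℝ) (hp : 0 ≤ p) : p ^ 5 * (1 + p) ≤ 1 + 2 * p ^ 6 := by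
  nlinarith [mul_nonneg (pow_nonneg hp 4) (sq_nonneg (p - 1)),
    mul_nonneg (pow_nonneg hp 2) (sq_nonneg (p ^ 2 - 1)), sq_nonneg (p ^ 3 - 1),
    pow_nonneg hp 2, pow_nonneg hp 4, pow_nonneg hp 6]

lemma scalar_bound (K G η dd p f : ℝ) (hK : 0 ≤ K) (hG : 0 ≤ G) (hη : 0 < η) (hd : 1 ≤ dd)
    (hp : 0 ≤ p) (hf : 0 ≤ f) (hfb : f ≤ 2 * dd * (1 + p)) :
    dd * K * dd * (p ^ 2) ^ 2 * (η * (3/2 * p * f)) / (1 + η * p ^ 3) ^ 2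
      + 2 * dd * K * p ^ 2 * f / (1 + η * p ^ 3)
      + G * (p ^ 2) ^ 2 * (η * (3/2 * p * f)) / (1 + η * p ^ 3) ^ 2
      + 4 * G * p ^ 2 * f / (1 + η * p ^ 3)
      ≤ (2 * dd * K + 4 * G) * (2 * dd) * ((η + 2) / η)
        + (dd * K * dd + G) * 3 * dd * ((η ^ 2 + 2) / η) := by
  have hD : 0 < 1 + η * p ^ 3 := by positivity
  -- base estimates
  have hbase1 : p ^ 2 * f / (1 + η * p ^ 3) ≤ 2 * dd * ((η + 2) / η) := by
    have h1 : p ^ 2 * f ≤ 2 * dd * (p ^ 2 * (1 + p)) := by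
      have := mul_le_mul_of_nonneg_left hfb (sq_nonneg p)
      nlinarith [sq_nonneg p]
    calc p ^ 2 * f / (1 + η * p ^ 3) ≤ 2 * dd * (p ^ 2 * (1 + p)) / (1 + η * p ^ 3) := by
          gcongr
      _ ≤ 2 * dd * ((η + 2) / η) := by
          rw [div_le_iff₀ hD]
          have h' : p ^ 2 * (1 + p) ≤ (η + 2) / η * (1 + η * p ^ 3) := by
            rw [div_mul_eq_mul_div, le_div_iff₀ hη]
            nlinarith [mul_le_mul_of_nonneg_left (p2_le p hp) hη.le,
              mul_nonneg (mul_nonneg hη.le hη.le) (pow_nonneg hp 3),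
              mul_nonneg hη.le (pow_nonneg hp 3)]
          calc 2 * dd * (p ^ 2 * (1 + p)) ≤ 2 * dd * ((η + 2) / η * (1 + η * p ^ 3)) :=
                mul_le_mul_of_nonneg_left h' (by linarith)
            _ = 2 * dd * ((η + 2) / η) * (1 + η * p ^ 3) := by ring
  have hbase2 : (p ^ 2) ^ 2 * (η * (3/2 * p * f)) / (1 + η * p ^ 3) ^ 2
      ≤ 3 * dd * ((η ^ 2 + 2) / η) := by
    have h1 : (p ^ 2) ^ 2 * (η * (3/2 * p * f)) ≤ 3 * dd * (η * (p ^ 5 * (1 + p))) := by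
      have h2 : p ^ 5 * f ≤ p ^ 5 * (2 * dd * (1 + p)) :=
        mul_le_mul_of_nonneg_left hfb (pow_nonneg hp 5)
      nlinarith [mul_nonneg hη.le (mul_nonneg (pow_nonneg hp 5) hf)]
    calc (p ^ 2) ^ 2 * (η * (3/2 * p * f)) / (1 + η * p ^ 3) ^ 2
        ≤ 3 * dd * (η * (p ^ 5 * (1 + p))) / (1 + η * p ^ 3) ^ 2 := by gcongr
      _ ≤ 3 * dd * ((η ^ 2 + 2) / η) := by
          rw [div_le_iff₀ (by positivity : (0:ℝ) < (1 + η * p ^ 3) ^ 2)]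
          have h' : η * (p ^ 5 * (1 + p)) ≤ (η ^ 2 + 2) / η * (1 + η * p ^ 3) ^ 2 := by
            rw [div_mul_eq_mul_div, le_div_iff₀ hη]
            nlinarith [mul_le_mul_of_nonneg_left (p5_le p hp) (mul_pos hη hη).le,
              mul_nonneg (mul_nonneg (mul_nonneg hη.le hη.le) hη.le) (pow_nonneg hp 3),
              mul_nonneg hη.le (pow_nonneg hp 3),
              mul_nonneg (mul_nonneg (mul_nonneg (mul_nonneg hη.le hη.le) hη.le) hη.le)
                (pow_nonneg hp 6),
              mul_nonneg (mul_nonneg hη.le hη.le) (pow_nonneg hp 6)]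
          calc 3 * dd * (η * (p ^ 5 * (1 + p)))
              ≤ 3 * dd * ((η ^ 2 + 2) / η * (1 + η * p ^ 3) ^ 2) :=
                mul_le_mul_of_nonneg_left h' (by linarith)
            _ = 3 * dd * ((η ^ 2 + 2) / η) * (1 + η * p ^ 3) ^ 2 := by ring
  have c1 : (0:ℝ) ≤ dd * K * dd := mul_nonneg (mul_nonneg (by linarith) hK) (by linarith)
  have c2 : (0:ℝ) ≤ 2 * dd * K := mul_nonneg (mul_nonneg (by norm_num) (by linarith)) hK
  have e1 : dd * K * dd * (p ^ 2) ^ 2 * (η * (3/2 * p * f)) / (1 + η * p ^ 3) ^ 2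
      ≤ dd * K * dd * (3 * dd * ((η ^ 2 + 2) / η)) := by
    rw [mul_assoc (dd * K * dd), mul_div_assoc]
    exact mul_le_mul_of_nonneg_left hbase2 c1
  have e2 : 2 * dd * K * p ^ 2 * f / (1 + η * p ^ 3)
      ≤ 2 * dd * K * (2 * dd * ((η + 2) / η)) := by
    rw [mul_assoc (2 * dd * K), mul_div_assoc]
    exact mul_le_mul_of_nonneg_left hbase1 c2
  have e3 : G * (p ^ 2) ^ 2 * (η * (3/2 * p * f)) / (1 + η * p ^ 3) ^ 2
      ≤ G * (3 * dd * ((η ^ 2 + 2) / η)) := by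
    rw [mul_assoc G, mul_div_assoc]
    exact mul_le_mul_of_nonneg_left hbase2 hG
  have e4 : 4 * G * p ^ 2 * f / (1 + η * p ^ 3)
      ≤ 4 * G * (2 * dd * ((η + 2) / η)) := by
    rw [mul_assoc (4 * G), mul_div_assoc]
    exact mul_le_mul_of_nonneg_left hbase1 (by linarith)
  have hsum := add_le_add (add_le_add (add_le_add e1 e2) e3) e4
  refine hsum.trans (le_of_eq ?_)
  ring

end Stmt16Aux

open Stmt16Aux in
/-- The regularized stored energy
`φ(F) = dK‖sph E‖²/(2+η‖E‖^{3/2}) + G‖dev E‖²/(1+η‖E‖^{3/2})`, `E = ½(FᵀF−I)`,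
is Fréchet differentiable everywhere with globally bounded derivative:
`∃ ℓ, ‖Dφ(F)‖ ≤ ℓ` (operator norm w.r.t. the Frobenius norm). -/
theorem stmt16 (d : ℕ) (hd : 1 ≤ d) (K G η : ℝ) (hK : 0 ≤ K) (hG : 0 ≤ G) (hη : 0 < η)
    (E sphE devE : Matrix (Fin d) (Fin d) ℝ → Matrix (Fin d) (Fin d) ℝ)
    (hE : ∀ F, E F = (1 / 2 : ℝ) • (Fᵀ * F - 1))
    (hsph : ∀ F, sphE F = (Matrix.trace (E F) / (d : ℝ)) • (1 : Matrix (Fin d) (Fin d) ℝ))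
    (hdev : ∀ F, devE F = E F - sphE F)
    (φ : Matrix (Fin d) (Fin d) ℝ → ℝ)
    (hφ : ∀ F, φ F = (d : ℝ) * K * ‖sphE F‖ ^ 2 / (2 + η * ‖E F‖ ^ (3 / 2 : ℝ))
        + G * ‖devE F‖ ^ 2 / (1 + η * ‖E F‖ ^ (3 / 2 : ℝ))) :
    Differentiable ℝ φ ∧ ∃ ℓ : ℝ, ∀ F, @Norm.norm _ ContinuousLinearMap.hasOpNorm (fderiv ℝ φ F) ≤ ℓ := by
  classical
  have hd1 : (1 : ℝ) ≤ (d : ℝ) := by exact_mod_cast hd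
  have hd0 : (0 : ℝ) < (d : ℝ) := by linarith
  -- scalar building blocks
  set τ : Mat d → ℝ := fun F => 1 / (2 * (d : ℝ)) * (ip F F - d) with hτdef
  set s : Mat d → ℝ := fun F => ip (E F) (E F) with hsdef
  set t : Mat d → ℝ := fun F => Real.sqrt ‖E F‖ * ‖E F‖ with htdef
  have htr : ∀ F, Matrix.trace (E F) = (ip F F - d) / 2 := by
    intro F
    rw [hE F, Matrix.trace_smul, Matrix.trace_sub, Matrix.trace_one, Stmt16Aux.trace_transpose_mul]
    simp [smul_eq_mul]
    ring
  have hτtr : ∀ F, τ F = Matrix.trace (E F) / d := by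
    intro F
    rw [htr F, hτdef]
    field_simp
  have hn1le : ‖(1 : Mat d)‖ ≤ (d : ℝ) := by
    have h := norm_one_sq (d := d)
    nlinarith [norm_nonneg (1 : Mat d)]
  have hτabs : ∀ F, |τ F| ≤ ‖E F‖ := by
    intro F
    rw [hτtr F, abs_div, abs_of_pos hd0]
    rw [div_le_iff₀ hd0]
    calc |Matrix.trace (E F)| ≤ ‖E F‖ * ‖(1 : Mat d)‖ := trace_le (E F)
      _ ≤ ‖E F‖ * d := mul_le_mul_of_nonneg_left hn1le (norm_nonneg _)
  have hsE : ∀ F, s F = ‖E F‖ ^ 2 := fun F => ip_self_eq (E F)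
  have hsph2 : ∀ F, ‖sphE F‖ ^ 2 = (d : ℝ) * (τ F * τ F) := by
    intro F
    rw [hsph F, norm_smul, mul_pow, Real.norm_eq_abs, sq_abs, norm_one_sq, ← hτtr F]
    ring
  have hdev2 : ∀ F, ‖devE F‖ ^ 2 = s F - (d : ℝ) * (τ F * τ F) := by
    intro F
    rw [hdev F, hsph F, ← hτtr F, ← ip_self_eq, ip_expand]
    have htrd : Matrix.trace (E F) = τ F * d := by rw [hτtr F]; field_simp
    rw [htrd, hsdef]
    ring
  have htE : ∀ F, ‖E F‖ ^ (3 / 2 : ℝ) = t F := fun F => rpow_32 _ (norm_nonneg _)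
  have htq : (fun F : Mat d => (s F) ^ (3 / 4 : ℝ)) = t := by
    funext F
    rw [hsE F, sq_rpow_34 _ (norm_nonneg _), htdef]
  have ht0 : ∀ F, 0 ≤ t F := fun F => mul_nonneg (Real.sqrt_nonneg _) (norm_nonneg _)
  -- the numerators and denominators
  set num1 : Mat d → ℝ := fun F => (d : ℝ) * K * ((d : ℝ) * (τ F * τ F)) with hnum1def
  set num2 : Mat d → ℝ := fun F => G * (s F - (d : ℝ) * (τ F * τ F)) with hnum2def
  set den1 : Mat d → ℝ := fun F => 2 + η * t F with hden1def
  set den2 : Mat d → ℝ := fun F => 1 + η * t F with hden2def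
  have hφfun : φ = fun F => num1 F * (den1 F)⁻¹ + num2 F * (den2 F)⁻¹ := by
    funext F
    rw [hφ F, hsph2 F, hdev2 F, htE F, div_eq_mul_inv, div_eq_mul_inv]
  set ℓ : ℝ := (2 * (d : ℝ) * K + 4 * G) * (2 * (d : ℝ)) * ((η + 2) / η)
      + ((d : ℝ) * K * (d : ℝ) + G) * 3 * (d : ℝ) * ((η ^ 2 + 2) / η) with hℓdef
  have hℓ0 : 0 ≤ ℓ := by
    have h1 : (0:ℝ) ≤ 2 * (d : ℝ) * K + 4 * G := by nlinarith
    have h2 : (0:ℝ) ≤ (d : ℝ) * K * (d : ℝ) + G :=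
      add_nonneg (mul_nonneg (mul_nonneg hd0.le hK) hd0.le) hG
    have h3 : (0:ℝ) ≤ (η + 2) / η := div_nonneg (by linarith) hη.le
    have h4 : (0:ℝ) ≤ (η ^ 2 + 2) / η := div_nonneg (by positivity) hη.le
    have := mul_nonneg (mul_nonneg h1 (by linarith : (0:ℝ) ≤ 2 * (d:ℝ))) h3
    have := mul_nonneg (mul_nonneg (mul_nonneg h2 (by norm_num : (0:ℝ) ≤ 3)) hd0.le) h4
    rw [hℓdef]; nlinarith
  -- the key pointwise derivative fact
  have key : ∀ F : Mat d, ∃ c : Mat d →L[ℝ] ℝ, HasFDerivAt φ c F ∧ @Norm.norm _ ContinuousLinearMap.hasOpNorm c ≤ ℓ := by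
    intro F
    obtain ⟨cE, hEF, hcEeval, hcEbound⟩ := hasFDerivAt_E E hE F
    -- derivative of τ
    have hτ' : HasFDerivAt τ ((1 / (2 * (d : ℝ))) • ((2 : ℝ) • ipCLM F)) F :=
      ((hasFDerivAt_N2 F).sub_const (d : ℝ)).const_mul (1 / (2 * (d : ℝ)))
    set Dτ : Mat d →L[ℝ] ℝ := (1 / (2 * (d : ℝ))) • ((2 : ℝ) • ipCLM F) with hDτdef
    have hDτeval : ∀ H, Dτ H = ip F H / d := by
      intro H
      rw [hDτdef]
      simp [smul_eq_mul]
      field_simp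
    have hDτ : ∀ H, |Dτ H| ≤ ‖F‖ * ‖H‖ / d := by
      intro H
      rw [hDτeval H, abs_div, abs_of_pos hd0]
      gcongr
      exact abs_ip_le F H
    -- derivative of s
    have hs' : HasFDerivAt s (((2 : ℝ) • ipCLM (E F)).comp cE) F := by
      have := HasFDerivAt.comp (g := fun M : Mat d => ip M M) F (hasFDerivAt_N2 (E F)) hEF
      exact this
    set Ds : Mat d →L[ℝ] ℝ := ((2 : ℝ) • ipCLM (E F)).comp cE with hDsdef
    have hDs : ∀ H, |Ds H| ≤ 2 * ‖E F‖ * (‖F‖ * ‖H‖) := by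
      intro H
      have heval : Ds H = 2 * ip (E F) (cE H) := by simp [hDsdef, smul_eq_mul]
      rw [heval, abs_mul, abs_of_nonneg (by norm_num : (0:ℝ) ≤ 2), mul_assoc]
      gcongr
      calc |ip (E F) (cE H)| ≤ ‖E F‖ * ‖cE H‖ := abs_ip_le _ _
        _ ≤ ‖E F‖ * (‖F‖ * ‖H‖) := mul_le_mul_of_nonneg_left (hcEbound H) (norm_nonneg _)
    -- derivative of t
    obtain ⟨ct, hts, hct⟩ : ∃ ct : Mat d →L[ℝ] ℝ, HasFDerivAt t ct F ∧
        ∀ H, |ct H| ≤ 3 / 2 * Real.sqrt ‖E F‖ * (‖F‖ * ‖H‖) := by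
      by_cases hE0 : E F = 0
      · refine ⟨0, ?_, ?_⟩
        · refine hasFDerivAt_iff_isLittleO_nhds_zero.mpr ?_
          have h2 : Filter.Tendsto (fun h : Mat d => F + h) (nhds 0) (nhds F) := by
            have : Filter.Tendsto (fun h : Mat d => F + h) (nhds 0) (nhds (F + 0)) :=
              (continuous_const.add continuous_id).tendsto 0
            simpa using this
          have hbig : (fun h : Mat d => E (F + h)) =O[nhds 0] fun h => h := by
            have h1 := hEF.isBigO_sub
            have h3 := h1.comp_tendsto h2
            simp only [Function.comp_def, hE0, sub_zero] at h3
            simpa using h3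
          have hsm : (fun h : Mat d => Real.sqrt ‖E (F + h)‖) =o[nhds 0]
              (fun _ => (1 : ℝ)) := by
            rw [Asymptotics.isLittleO_one_iff]
            have hc : Filter.Tendsto (fun h : Mat d => E (F + h)) (nhds 0) (nhds (E F)) :=
              hEF.continuousAt.tendsto.comp h2
            rw [hE0] at hc
            have hc1 : Filter.Tendsto (fun h : Mat d => ‖E (F + h)‖) (nhds 0) (nhds 0) :=
              tendsto_norm_zero.comp hc
            have := (Real.continuous_sqrt.tendsto 0).comp hc1
            simpa [Function.comp_def] using this
          have hprod := hsm.mul_isBigO hbig.norm_norm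
          have hfin : (fun h : Mat d => t (F + h)) =o[nhds 0] fun h : Mat d => ‖h‖ := by
            refine hprod.congr (fun h => rfl) fun h => one_mul _
          have hfin2 := Asymptotics.isLittleO_norm_right.mp hfin
          simp only [htdef, hE0, norm_zero, Real.sqrt_zero, mul_zero, sub_zero,
            ContinuousLinearMap.zero_apply]
          refine hfin2.congr_left fun h => ?_
          show t (F + h) = _ - (0 : ℝ)
          rw [sub_zero]
        · intro H
          simp only [ContinuousLinearMap.zero_apply, abs_zero]
          positivity
      · have he0 : 0 < ‖E F‖ := norm_pos_iff.mpr hE0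
        have hsne : s F ≠ 0 := by rw [hsE F]; positivity
        have hrpow : HasDerivAt (fun y : ℝ => y ^ (3 / 4 : ℝ))
            (3 / 4 * s F ^ ((3 / 4 : ℝ) - 1)) (s F) :=
          Real.hasDerivAt_rpow_const (Or.inl hsne)
        have hcomp := hrpow.comp_hasFDerivAt F hs'
        simp only [Function.comp_def] at hcomp
        rw [htq] at hcomp
        refine ⟨_, hcomp, ?_⟩
        intro H
        have hpow : s F ^ ((3 / 4 : ℝ) - 1) = (Real.sqrt ‖E F‖)⁻¹ := by
          rw [hsE F]; exact sq_rpow_m14 _ he0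
        have heval : ((3 / 4 * s F ^ ((3 / 4 : ℝ) - 1)) • Ds) H
            = 3 / 4 * s F ^ ((3 / 4 : ℝ) - 1) * Ds H := by simp
        show |3 / 4 * s F ^ ((3 / 4 : ℝ) - 1) * Ds H| ≤ _; rw [hpow, abs_mul]
        have habs1 : |3 / 4 * (Real.sqrt ‖E F‖)⁻¹| = 3 / 4 * (Real.sqrt ‖E F‖)⁻¹ := by
          rw [abs_of_nonneg]; positivity
        rw [habs1]
        calc 3 / 4 * (Real.sqrt ‖E F‖)⁻¹ * |Ds H|
            ≤ 3 / 4 * (Real.sqrt ‖E F‖)⁻¹ * (2 * ‖E F‖ * (‖F‖ * ‖H‖)) :=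
              mul_le_mul_of_nonneg_left (hDs H) (by positivity)
          _ = 3 / 2 * (‖E F‖ / Real.sqrt ‖E F‖) * (‖F‖ * ‖H‖) := by ring
          _ = 3 / 2 * Real.sqrt ‖E F‖ * (‖F‖ * ‖H‖) := by rw [Real.div_sqrt]
    -- assemble the derivative of φ
    have hττ := hτ'.mul hτ'
    have hnum1' : HasFDerivAt num1 (((d : ℝ) * K) • ((d : ℝ) • (τ F • Dτ + τ F • Dτ))) F :=
      (hττ.const_mul (d : ℝ)).const_mul ((d : ℝ) * K)
    have hnum2' : HasFDerivAt num2 (G • (Ds - (d : ℝ) • (τ F • Dτ + τ F • Dτ))) F :=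
      (hs'.sub (hττ.const_mul (d : ℝ))).const_mul G
    have hden1pos : 0 < den1 F := by
      have := mul_nonneg hη.le (ht0 F)
      show (0:ℝ) < 2 + η * t F
      linarith
    have hden2pos : 0 < den2 F := by
      have := mul_nonneg hη.le (ht0 F)
      show (0:ℝ) < 1 + η * t F
      linarith
    have hden1' : HasFDerivAt den1 (η • ct) F := (hts.const_mul η).const_add 2
    have hden2' : HasFDerivAt den2 (η • ct) F := (hts.const_mul η).const_add 1
    have hinv1 : HasFDerivAt (fun F => (den1 F)⁻¹)
        ((-(den1 F ^ 2)⁻¹) • (η • ct)) F :=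
      (hasDerivAt_inv hden1pos.ne').comp_hasFDerivAt F hden1'
    have hinv2 : HasFDerivAt (fun F => (den2 F)⁻¹)
        ((-(den2 F ^ 2)⁻¹) • (η • ct)) F :=
      (hasDerivAt_inv hden2pos.ne').comp_hasFDerivAt F hden2'
    have hq1 := hnum1'.mul hinv1
    have hq2 := hnum2'.mul hinv2
    have hφ' : HasFDerivAt φ
        ((num1 F • ((-(den1 F ^ 2)⁻¹) • (η • ct))
            + (den1 F)⁻¹ • (((d : ℝ) * K) • ((d : ℝ) • (τ F • Dτ + τ F • Dτ))))
          + (num2 F • ((-(den2 F ^ 2)⁻¹) • (η • ct))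
            + (den2 F)⁻¹ • (G • (Ds - (d : ℝ) • (τ F • Dτ + τ F • Dτ))))) F := by
      rw [hφfun]
      exact hq1.add hq2
    refine ⟨_, hφ', ?_⟩
    -- now bound the operator norm
    set p := Real.sqrt ‖E F‖ with hpdef
    have hp : 0 ≤ p := Real.sqrt_nonneg _
    have hpe : p ^ 2 = ‖E F‖ := Real.sq_sqrt (norm_nonneg _)
    have hτabs' : |τ F| ≤ p ^ 2 := by rw [hpe]; exact hτabs F
    have ht3 : t F = p ^ 3 := by
      simp only [htdef]
      rw [← hpe, Real.sqrt_sq hp]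
      ring
    have hden1val : den1 F = 2 + η * p ^ 3 := by simp only [hden1def]; rw [ht3]
    have hden2val : den2 F = 1 + η * p ^ 3 := by simp only [hden2def]; rw [ht3]
    have hD : (0 : ℝ) < 1 + η * p ^ 3 := by
      have := mul_nonneg hη.le (pow_nonneg hp 3); linarith
    have hden1ge : 1 + η * p ^ 3 ≤ den1 F := by rw [hden1val]; linarith
    have hden2ge : 1 + η * p ^ 3 ≤ den2 F := by rw [hden2val]
    have hinv1le : (den1 F)⁻¹ ≤ (1 + η * p ^ 3)⁻¹ :=
      inv_anti₀ hD hden1ge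
    have hinv2le : (den2 F)⁻¹ ≤ (1 + η * p ^ 3)⁻¹ :=
      inv_anti₀ hD hden2ge
    have hinvsq1 : (den1 F ^ 2)⁻¹ ≤ ((1 + η * p ^ 3) ^ 2)⁻¹ :=
      inv_anti₀ (pow_pos hD 2) (pow_le_pow_left₀ hD.le hden1ge 2)
    have hinvsq2 : (den2 F ^ 2)⁻¹ ≤ ((1 + η * p ^ 3) ^ 2)⁻¹ :=
      inv_anti₀ (pow_pos hD 2) (pow_le_pow_left₀ hD.le hden2ge 2)
    have hττle : τ F * τ F ≤ p ^ 2 * p ^ 2 := by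
      calc τ F * τ F = |τ F| * |τ F| := (abs_mul_abs_self _).symm
        _ ≤ p ^ 2 * p ^ 2 := mul_le_mul hτabs' hτabs' (abs_nonneg _) (by positivity)
    have hnum1nn : 0 ≤ num1 F := by
      simp only [hnum1def]
      exact mul_nonneg (mul_nonneg hd0.le hK) (mul_nonneg hd0.le (mul_self_nonneg _))
    have hnum1le : num1 F ≤ (d : ℝ) * K * (d : ℝ) * (p ^ 2 * p ^ 2) := by
      simp only [hnum1def]
      calc (d : ℝ) * K * ((d : ℝ) * (τ F * τ F))
          ≤ (d : ℝ) * K * ((d : ℝ) * (p ^ 2 * p ^ 2)) :=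
            mul_le_mul_of_nonneg_left
              (mul_le_mul_of_nonneg_left hττle hd0.le) (mul_nonneg hd0.le hK)
        _ = (d : ℝ) * K * (d : ℝ) * (p ^ 2 * p ^ 2) := by ring
    have hsE' : s F = p ^ 2 * p ^ 2 := by rw [hsE F, ← hpe]; ring
    have hnum2eq : num2 F = G * ‖devE F‖ ^ 2 := by simp only [hnum2def]; rw [hdev2 F]
    have hnum2nn : 0 ≤ num2 F := by rw [hnum2eq]; positivity
    have hnum2le : num2 F ≤ G * (p ^ 2 * p ^ 2) := by
      simp only [hnum2def]
      have hd2 : 0 ≤ (d : ℝ) * (τ F * τ F) := mul_nonneg hd0.le (mul_self_nonneg _)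
      have : s F - (d : ℝ) * (τ F * τ F) ≤ p ^ 2 * p ^ 2 := by rw [← hsE']; linarith
      exact mul_le_mul_of_nonneg_left this hG
    have hfb : ‖F‖ ≤ 2 * (d : ℝ) * (1 + p) := by
      have hf2 : ‖F‖ ^ 2 = ip F F := (ip_self_eq F).symm
      have htrd : Matrix.trace (E F) = τ F * d := by rw [hτtr F]; field_simp
      have hipf : ip F F = 2 * (τ F * d) + d := by
        have h := htr F
        rw [htrd] at h
        linarith
      have hτle : τ F ≤ p ^ 2 := (le_abs_self _).trans hτabs'
      have hsq : ‖F‖ ^ 2 ≤ (2 * (d : ℝ) * (1 + p)) ^ 2 := by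
        rw [hf2, hipf]
        nlinarith [sq_nonneg p, mul_nonneg hd0.le hp, sq_nonneg (1 + p),
          mul_le_mul_of_nonneg_left hτle hd0.le]
      have h2 := Real.sqrt_le_sqrt hsq
      rwa [Real.sqrt_sq (norm_nonneg F), Real.sqrt_sq (by positivity)] at h2
    refine ContinuousLinearMap.opNorm_le_bound _ hℓ0 fun H => ?_
    have heval : ((num1 F • ((-(den1 F ^ 2)⁻¹) • (η • ct))
            + (den1 F)⁻¹ • (((d : ℝ) * K) • ((d : ℝ) • (τ F • Dτ + τ F • Dτ))))
          + (num2 F • ((-(den2 F ^ 2)⁻¹) • (η • ct))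
            + (den2 F)⁻¹ • (G • (Ds - (d : ℝ) • (τ F • Dτ + τ F • Dτ))))) H
        = num1 F * (-(den1 F ^ 2)⁻¹ * (η * ct H))
          + (den1 F)⁻¹ * ((d : ℝ) * K * ((d : ℝ) * (τ F * Dτ H + τ F * Dτ H)))
          + (num2 F * (-(den2 F ^ 2)⁻¹ * (η * ct H))
            + (den2 F)⁻¹ * (G * (Ds H - (d : ℝ) * (τ F * Dτ H + τ F * Dτ H)))) := by
      simp only [ContinuousLinearMap.add_apply, ContinuousLinearMap.coe_smul',
        Pi.smul_apply, ContinuousLinearMap.sub_apply, smul_eq_mul]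
      try ring
    rw [Real.norm_eq_abs]; refine (le_of_eq (congrArg abs heval)).trans ?_
    -- bounds for the four summands
    have hη32 : ∀ H : Mat d, η * |ct H| ≤ η * (3 / 2 * p * (‖F‖ * ‖H‖)) := fun H =>
      mul_le_mul_of_nonneg_left (hct H) hη.le
    have hT1 : |num1 F * (-(den1 F ^ 2)⁻¹ * (η * ct H))|
        ≤ (d : ℝ) * K * (d : ℝ) * (p ^ 2 * p ^ 2)
          * (((1 + η * p ^ 3) ^ 2)⁻¹ * (η * (3 / 2 * p * (‖F‖ * ‖H‖)))) := by
      have habs : |num1 F * (-(den1 F ^ 2)⁻¹ * (η * ct H))|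
          = num1 F * ((den1 F ^ 2)⁻¹ * (η * |ct H|)) := by
        rw [abs_mul]
        congr 1
        · exact abs_of_nonneg hnum1nn
        · rw [abs_mul, abs_neg, abs_mul, abs_inv,
            abs_of_nonneg (sq_nonneg (den1 F)), abs_of_nonneg hη.le]
      rw [habs]
      exact mul3_le hnum1nn (inv_nonneg.mpr (sq_nonneg _))
        (mul_nonneg hη.le (abs_nonneg _)) hnum1le hinvsq1 (hη32 H)
    have hT3 : |num2 F * (-(den2 F ^ 2)⁻¹ * (η * ct H))|
        ≤ G * (p ^ 2 * p ^ 2)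
          * (((1 + η * p ^ 3) ^ 2)⁻¹ * (η * (3 / 2 * p * (‖F‖ * ‖H‖)))) := by
      have habs : |num2 F * (-(den2 F ^ 2)⁻¹ * (η * ct H))|
          = num2 F * ((den2 F ^ 2)⁻¹ * (η * |ct H|)) := by
        rw [abs_mul]
        congr 1
        · exact abs_of_nonneg hnum2nn
        · rw [abs_mul, abs_neg, abs_mul, abs_inv,
            abs_of_nonneg (sq_nonneg (den2 F)), abs_of_nonneg hη.le]
      rw [habs]
      exact mul3_le hnum2nn (inv_nonneg.mpr (sq_nonneg _))
        (mul_nonneg hη.le (abs_nonneg _)) hnum2le hinvsq2 (hη32 H)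
    have hpair : |τ F * Dτ H + τ F * Dτ H| ≤ 2 * (p ^ 2 * (‖F‖ * ‖H‖ / (d : ℝ))) := by
      calc |τ F * Dτ H + τ F * Dτ H| ≤ |τ F * Dτ H| + |τ F * Dτ H| := abs_add_le _ _
        _ = 2 * (|τ F| * |Dτ H|) := by rw [abs_mul]; ring
        _ ≤ 2 * (p ^ 2 * (‖F‖ * ‖H‖ / (d : ℝ))) := by
            have := mul_le_mul hτabs' (hDτ H) (abs_nonneg _) (by positivity : (0:ℝ) ≤ p ^ 2)
            linarith
    have hT2 : |(den1 F)⁻¹ * ((d : ℝ) * K * ((d : ℝ) * (τ F * Dτ H + τ F * Dτ H)))|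
        ≤ (1 + η * p ^ 3)⁻¹ * (2 * (d : ℝ) * K * (p ^ 2 * (‖F‖ * ‖H‖))) := by
      have hin : |(d : ℝ) * K * ((d : ℝ) * (τ F * Dτ H + τ F * Dτ H))|
          ≤ 2 * (d : ℝ) * K * (p ^ 2 * (‖F‖ * ‖H‖)) := by
        rw [abs_mul, abs_of_nonneg (mul_nonneg hd0.le hK), abs_mul, abs_of_nonneg hd0.le]
        calc (d : ℝ) * K * ((d : ℝ) * |τ F * Dτ H + τ F * Dτ H|)
            ≤ (d : ℝ) * K * ((d : ℝ) * (2 * (p ^ 2 * (‖F‖ * ‖H‖ / (d : ℝ))))) :=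
              mul_le_mul_of_nonneg_left
                (mul_le_mul_of_nonneg_left hpair hd0.le) (mul_nonneg hd0.le hK)
          _ = 2 * (d : ℝ) * K * (p ^ 2 * (‖F‖ * ‖H‖)) := by field_simp; try ring
      rw [abs_mul, abs_inv, abs_of_nonneg hden1pos.le]
      exact mul2_le (inv_nonneg.mpr hden1pos.le) (abs_nonneg _) hinv1le hin
    have hT4 : |(den2 F)⁻¹ * (G * (Ds H - (d : ℝ) * (τ F * Dτ H + τ F * Dτ H)))|
        ≤ (1 + η * p ^ 3)⁻¹ * (4 * G * (p ^ 2 * (‖F‖ * ‖H‖))) := by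
      have hDs' : |Ds H| ≤ 2 * p ^ 2 * (‖F‖ * ‖H‖) := by rw [hpe]; exact hDs H
      have hin : |G * (Ds H - (d : ℝ) * (τ F * Dτ H + τ F * Dτ H))|
          ≤ 4 * G * (p ^ 2 * (‖F‖ * ‖H‖)) := by
        rw [abs_mul, abs_of_nonneg hG]
        have h1 : |Ds H - (d : ℝ) * (τ F * Dτ H + τ F * Dτ H)|
            ≤ |Ds H| + (d : ℝ) * |τ F * Dτ H + τ F * Dτ H| := by
          calc |Ds H - (d : ℝ) * (τ F * Dτ H + τ F * Dτ H)|
              ≤ |Ds H| + |(d : ℝ) * (τ F * Dτ H + τ F * Dτ H)| := abs_sub _ _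
            _ = |Ds H| + (d : ℝ) * |τ F * Dτ H + τ F * Dτ H| := by
                rw [abs_mul, abs_of_nonneg hd0.le]
        have h2 : (d : ℝ) * |τ F * Dτ H + τ F * Dτ H|
            ≤ 2 * (p ^ 2 * (‖F‖ * ‖H‖)) := by
          calc (d : ℝ) * |τ F * Dτ H + τ F * Dτ H|
              ≤ (d : ℝ) * (2 * (p ^ 2 * (‖F‖ * ‖H‖ / (d : ℝ)))) :=
                mul_le_mul_of_nonneg_left hpair hd0.le
            _ = 2 * (p ^ 2 * (‖F‖ * ‖H‖)) := by field_simp; try ring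
        calc G * |Ds H - (d : ℝ) * (τ F * Dτ H + τ F * Dτ H)|
            ≤ G * (2 * p ^ 2 * (‖F‖ * ‖H‖) + 2 * (p ^ 2 * (‖F‖ * ‖H‖))) := by
              refine mul_le_mul_of_nonneg_left ?_ hG
              calc |Ds H - (d : ℝ) * (τ F * Dτ H + τ F * Dτ H)|
                  ≤ |Ds H| + (d : ℝ) * |τ F * Dτ H + τ F * Dτ H| := h1
                _ ≤ 2 * p ^ 2 * (‖F‖ * ‖H‖) + 2 * (p ^ 2 * (‖F‖ * ‖H‖)) :=
                    add_le_add hDs' h2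
          _ = 4 * G * (p ^ 2 * (‖F‖ * ‖H‖)) := by ring
      rw [abs_mul, abs_inv, abs_of_nonneg hden2pos.le]
      exact mul2_le (inv_nonneg.mpr hden2pos.le) (abs_nonneg _) hinv2le hin
    -- combine
    have htri : |num1 F * (-(den1 F ^ 2)⁻¹ * (η * ct H))
          + (den1 F)⁻¹ * ((d : ℝ) * K * ((d : ℝ) * (τ F * Dτ H + τ F * Dτ H)))
          + (num2 F * (-(den2 F ^ 2)⁻¹ * (η * ct H))
            + (den2 F)⁻¹ * (G * (Ds H - (d : ℝ) * (τ F * Dτ H + τ F * Dτ H))))|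
        ≤ |num1 F * (-(den1 F ^ 2)⁻¹ * (η * ct H))|
          + |(den1 F)⁻¹ * ((d : ℝ) * K * ((d : ℝ) * (τ F * Dτ H + τ F * Dτ H)))|
          + (|num2 F * (-(den2 F ^ 2)⁻¹ * (η * ct H))|
            + |(den2 F)⁻¹ * (G * (Ds H - (d : ℝ) * (τ F * Dτ H + τ F * Dτ H)))|) :=
      (abs_add_le _ _).trans (add_le_add (abs_add_le _ _) (abs_add_le _ _))
    have hsb := scalar_bound K G η (d : ℝ) p ‖F‖ hK hG hη hd1 hp (norm_nonneg F) hfb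
    have hfinal := mul_le_mul_of_nonneg_right hsb (norm_nonneg H)
    calc |num1 F * (-(den1 F ^ 2)⁻¹ * (η * ct H))
          + (den1 F)⁻¹ * ((d : ℝ) * K * ((d : ℝ) * (τ F * Dτ H + τ F * Dτ H)))
          + (num2 F * (-(den2 F ^ 2)⁻¹ * (η * ct H))
            + (den2 F)⁻¹ * (G * (Ds H - (d : ℝ) * (τ F * Dτ H + τ F * Dτ H))))|
        ≤ (d : ℝ) * K * (d : ℝ) * (p ^ 2 * p ^ 2)
            * (((1 + η * p ^ 3) ^ 2)⁻¹ * (η * (3 / 2 * p * (‖F‖ * ‖H‖))))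
          + (1 + η * p ^ 3)⁻¹ * (2 * (d : ℝ) * K * (p ^ 2 * (‖F‖ * ‖H‖)))
          + (G * (p ^ 2 * p ^ 2)
              * (((1 + η * p ^ 3) ^ 2)⁻¹ * (η * (3 / 2 * p * (‖F‖ * ‖H‖))))
            + (1 + η * p ^ 3)⁻¹ * (4 * G * (p ^ 2 * (‖F‖ * ‖H‖)))) :=
          htri.trans (add_le_add (add_le_add hT1 hT2) (add_le_add hT3 hT4))
      _ = ((d : ℝ) * K * (d : ℝ) * (p ^ 2) ^ 2 * (η * (3/2 * p * ‖F‖)) / (1 + η * p ^ 3) ^ 2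
            + 2 * (d : ℝ) * K * p ^ 2 * ‖F‖ / (1 + η * p ^ 3)
            + G * (p ^ 2) ^ 2 * (η * (3/2 * p * ‖F‖)) / (1 + η * p ^ 3) ^ 2
            + 4 * G * p ^ 2 * ‖F‖ / (1 + η * p ^ 3)) * ‖H‖ := by ring
      _ ≤ ℓ * ‖H‖ := hfinal
  constructor
  · intro F
    obtain ⟨c, hc, -⟩ := key F
    exact hc.differentiableAt
  · refine ⟨ℓ, fun F => ?_⟩
    obtain ⟨c, hc, hb⟩ := key F
    rw [← hc.fderiv] at hb
    exact hb
end
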